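/- For every m ∈ ℕ, the function x ↦ conj(Q_m(x)) is right anti-hyperholomorphic on ℍ: at every point, ∂(conj Q_m)/∂x₀ − (∂(conj Q_m)/∂x₁)·e₁ − (∂(conj Q_m)/∂x₂)·e₂ − (∂(conj Q_m)/∂x₃)·e₃ = 0, where the imaginary units multiply on the right. -/

import Mathlib

open Quaternion

noncomputable section

/-- The quaternion unit `e₁`. -/
def e1 : ℍ[ℝ] := ⟨0, 1, 0, 0⟩

/-- The quaternion unit `e₂`. -/
def e2 : ℍ[ℝ] := ⟨0, 0, 1, 0⟩

/-- The quaternion unit `e₃`. -/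
def e3 : ℍ[ℝ] := ⟨0, 0, 0, 1⟩

/-- The coefficients `T^m_j = 2(m-j+1)/((m+1)(m+2))`. -/
def appellT (m j : ℕ) : ℝ :=
  (2 * ((m : ℝ) - (j : ℝ) + 1)) / (((m : ℝ) + 1) * ((m : ℝ) + 2))

/-- The `m`-th quaternionic Appell polynomial
`Q_m(x) = Σ_{j=0}^m T^m_j x^{m-j} x̄^j`. -/
def appellQ (m : ℕ) (x : ℍ[ℝ]) : ℍ[ℝ] :=
  ∑ j ∈ Finset.range (m + 1), appellT m j • (x ^ (m - j) * (star x) ^ j)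

/-! ### Auxiliary material -/

/-- Quaternionic conjugation as a continuous `ℝ`-linear map. -/
def starC : ℍ[ℝ] →L[ℝ] ℍ[ℝ] :=
{ toFun := star
  map_add' := star_add
  map_smul' := fun r a => by ext <;> simp
  cont := (AddMonoidHomClass.isometry_of_norm (starAddEquiv : ℍ[ℝ] ≃+ ℍ[ℝ])
    Quaternion.norm_star).continuous }

/-- `v ↦ a * v * b` as a continuous linear map. -/
def ins (a b : ℍ[ℝ]) : ℍ[ℝ] →L[ℝ] ℍ[ℝ] := ContinuousLinearMap.mulLeftRight ℝ ℍ[ℝ] a b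

/-- `v ↦ a * star v * b` as a continuous linear map. -/
def sins (a b : ℍ[ℝ]) : ℍ[ℝ] →L[ℝ] ℍ[ℝ] := (ins a b).comp starC

@[simp] lemma ins_apply (a b v : ℍ[ℝ]) : ins a b v = a * v * b := rfl
@[simp] lemma sins_apply (a b v : ℍ[ℝ]) : sins a b v = a * star v * b := rfl

lemma hasFDerivAt_qpow (n : ℕ) (x : ℍ[ℝ]) :
    HasFDerivAt (fun y : ℍ[ℝ] => y ^ n)
      (∑ i ∈ Finset.range n, ins (x ^ i) (x ^ (n - 1 - i))) x := by
  induction n with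
  | zero => simpa using hasFDerivAt_const (1 : ℍ[ℝ]) x
  | succ n ih =>
      have h := ih.mul' (hasFDerivAt_id x)
      have h2 : HasFDerivAt (fun y : ℍ[ℝ] => y ^ (n+1))
          (x ^ n • ContinuousLinearMap.id ℝ ℍ[ℝ]
            + (∑ i ∈ Finset.range n, ins (x ^ i) (x ^ (n - 1 - i))).smulRight x) x := by
        have h' : HasFDerivAt (fun y : ℍ[ℝ] => y ^ (n+1))
            (x ^ n • ContinuousLinearMap.id ℝ ℍ[ℝ]
              + MulOpposite.op x • (∑ i ∈ Finset.range n, ins (x ^ i) (x ^ (n - 1 - i)))) x := by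
          exact h.congr_of_eventuallyEq (Filter.Eventually.of_forall fun y => by simp [pow_succ])
        exact h'.congr_fderiv (ContinuousLinearMap.ext fun v => by simp)
      refine h2.congr_fderiv ?_
      refine ContinuousLinearMap.ext fun v => ?_
      simp only [ContinuousLinearMap.add_apply, ContinuousLinearMap.smul_apply,
        ContinuousLinearMap.smulRight_apply, ContinuousLinearMap.id_apply,
        ContinuousLinearMap.sum_apply, ins_apply, smul_eq_mul]
      rw [Finset.sum_range_succ, Finset.sum_mul]
      have : ∀ i ∈ Finset.range n, x ^ i * v * x ^ (n - 1 - i) * x = x ^ i * v * x ^ (n + 1 - 1 - i) := by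
        intro i hi
        rw [Finset.mem_range] at hi
        have hh : n + 1 - 1 - i = (n - 1 - i) + 1 := by omega
        rw [hh, pow_succ, mul_assoc]
      rw [Finset.sum_congr rfl this]
      simp [add_comm]

lemma hasFDerivAt_qmono (a b : ℕ) (x : ℍ[ℝ]) :
    HasFDerivAt (fun y : ℍ[ℝ] => y ^ a * (star y) ^ b)
      (∑ i ∈ Finset.range a, ins (x ^ i) (x ^ (a - 1 - i) * (star x) ^ b)
        + ∑ i ∈ Finset.range b, sins (x ^ a * (star x) ^ i) ((star x) ^ (b - 1 - i))) x := by
  have hstar : HasFDerivAt (fun y : ℍ[ℝ] => (star y) ^ b)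
      ((∑ i ∈ Finset.range b, ins ((star x) ^ i) ((star x) ^ (b - 1 - i))).comp starC) x := by
    have hs : HasFDerivAt (fun y : ℍ[ℝ] => star y) starC x := starC.hasFDerivAt
    exact (hasFDerivAt_qpow b (star x)).comp x hs
  have h := (hasFDerivAt_qpow a x).mul' hstar
  refine h.congr_fderiv ?_
  refine ContinuousLinearMap.ext fun v => ?_
  simp only [ContinuousLinearMap.add_apply, ContinuousLinearMap.smul_apply,
    ContinuousLinearMap.smulRight_apply, ContinuousLinearMap.sum_apply,
    ContinuousLinearMap.comp_apply, ins_apply, sins_apply, smul_eq_mul,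
    ContinuousLinearMap.coe_sum', op_smul_eq_mul]
  have h1 : starC v = star v := rfl
  rw [Finset.sum_mul, Finset.mul_sum]
  rw [h1, add_comm]
  congr 1
  · exact Finset.sum_congr rfl fun i _ => by rw [mul_assoc]
  · exact Finset.sum_congr rfl fun i _ => by rw [← mul_assoc, ← mul_assoc]

lemma key1 (q r : ℍ[ℝ]) :
    q * 1 * r - q * e1 * r * e1 - q * e2 * r * e2 - q * e3 * r * e3
      = (2:ℝ) • (q * r) + (2:ℝ) • (q * star r) := by
  refine Quaternion.ext _ _ ?_ ?_ ?_ ?_ <;> simp [Quaternion.re_mul, Quaternion.imI_mul, Quaternion.imJ_mul,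
    Quaternion.imK_mul] <;> simp [e1, e2, e3] <;> ring

lemma key2 (q r : ℍ[ℝ]) :
    q * star 1 * r - q * star e1 * r * e1 - q * star e2 * r * e2 - q * star e3 * r * e3
      = -((2:ℝ) • (q * star r)) := by
  refine Quaternion.ext _ _ ?_ ?_ ?_ ?_ <;> simp [Quaternion.re_mul, Quaternion.imI_mul, Quaternion.imJ_mul,
    Quaternion.imK_mul] <;> simp [e1, e2, e3] <;> ring

lemma starx_comm (x : ℍ[ℝ]) : Commute (star x) x := by
  unfold Commute SemiconjBy
  rw [Quaternion.star_mul_self, Quaternion.self_mul_star]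

lemma termA (m j i : ℕ) (hi : i < j) (hj : j ≤ m) (x : ℍ[ℝ]) :
    x^i * 1 * (x^(j-1-i) * star x^(m-j)) - x^i * e1 * (x^(j-1-i) * star x^(m-j)) * e1
      - x^i * e2 * (x^(j-1-i) * star x^(m-j)) * e2 - x^i * e3 * (x^(j-1-i) * star x^(m-j)) * e3
      = (2:ℝ) • (x^(j-1) * star x^(m-j)) + (2:ℝ) • (x^(m-1-(j-1-i)) * star x^(j-1-i)) := by
  rw [key1]
  congr 1
  · have he : i + (j - 1 - i) = j - 1 := by omega
    rw [← mul_assoc, ← pow_add, he]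
  · have he : i + (m - j) = m - 1 - (j - 1 - i) := by omega
    rw [star_mul, star_pow, star_pow, star_star, ← mul_assoc, ← pow_add, he]

lemma termB (m j i : ℕ) (hi : i < m - j) (x : ℍ[ℝ]) :
    x^j * star x^i * star 1 * star x^(m-j-1-i)
      - x^j * star x^i * star e1 * star x^(m-j-1-i) * e1
      - x^j * star x^i * star e2 * star x^(m-j-1-i) * e2
      - x^j * star x^i * star e3 * star x^(m-j-1-i) * e3
      = -((2:ℝ) • (x^(m-1-i) * star x^i)) := by
  have h := key2 (x^j * star x^i) (star x^(m-j-1-i))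
  rw [h]
  congr 2
  have he : j + (m - j - 1 - i) = m - 1 - i := by omega
  rw [star_pow, star_star, mul_assoc, ((starx_comm x).pow_pow i (m-j-1-i)).eq,
    ← mul_assoc, ← pow_add, he]

lemma sumT (m n : ℕ) : ∑ j ∈ Finset.range n, appellT m j
    = (n : ℝ) * (2 * (m : ℝ) + 3 - (n : ℝ)) / (((m : ℝ) + 1) * ((m : ℝ) + 2)) := by
  have h1 : ((m : ℝ) + 1) ≠ 0 := by positivity
  have h2 : ((m : ℝ) + 2) ≠ 0 := by positivity
  induction n with
  | zero => simp
  | succ n ih =>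
      rw [Finset.sum_range_succ, ih, appellT]
      push_cast
      field_simp
      ring

lemma coeffZero (m i : ℕ) (hi : i < m + 1) :
    (∑ j ∈ Finset.Ico (i+1) (m+1), 2 * appellT m j)
      - (∑ j ∈ Finset.range (m-i), 2 * appellT m j)
      + ((2 * (m - i : ℕ) : ℝ) * appellT m (m - i)) = 0 := by
  have h1 : ((m : ℝ) + 1) ≠ 0 := by positivity
  have h2 : ((m : ℝ) + 2) ≠ 0 := by positivity
  have hcast : ((m - i : ℕ) : ℝ) = (m : ℝ) - (i : ℝ) := by
    rw [Nat.cast_sub (by omega)]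
  rw [← Finset.mul_sum, ← Finset.mul_sum,
    Finset.sum_Ico_eq_sub _ (by omega), sumT, sumT, sumT, appellT, hcast]
  push_cast
  field_simp
  ring

lemma coeffZero' (m i : ℕ) (hi : i < m + 1) :
    (∑ j ∈ Finset.Ico (i+1) (m+1), appellT m j * 2)
      - (∑ j ∈ Finset.range (m-i), appellT m j * 2)
      + (appellT m (m - i) * (((m - i : ℕ) : ℝ) * 2)) = 0 := by
  have h := coeffZero m i hi
  have e1 : ∀ (s : Finset ℕ), ∑ j ∈ s, appellT m j * 2 = ∑ j ∈ s, 2 * appellT m j := by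
    intro s; exact Finset.sum_congr rfl fun j _ => mul_comm _ _
  rw [e1, e1]
  rw [show appellT m (m - i) * (((m - i : ℕ) : ℝ) * 2)
    = (2 * (m - i : ℕ) : ℝ) * appellT m (m - i) by push_cast; ring]
  exact h

/-- The `j`-th group of terms of the Fueter-operator expansion. -/
def Fj (m j : ℕ) (x : ℍ[ℝ]) : ℍ[ℝ] :=
  (∑ i ∈ Finset.range j, (appellT m j * 2) • (x^(m-1-i) * star x^i))
  - (∑ i ∈ Finset.range (m-j), (appellT m j * 2) • (x^(m-1-i) * star x^i))
  + ((appellT m j * ((j:ℝ) * 2)) • (x^(j-1) * star x^(m-j)))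

lemma master (m : ℕ) (x : ℍ[ℝ]) : ∑ j ∈ Finset.range (m+1), Fj m j x = 0 := by
  unfold Fj
  rw [Finset.sum_add_distrib, Finset.sum_sub_distrib]
  have hA : ∑ j ∈ Finset.range (m+1), ∑ i ∈ Finset.range j,
      (appellT m j * 2) • (x^(m-1-i) * star x^i)
      = ∑ i ∈ Finset.range (m+1),
          (∑ j ∈ Finset.Ico (i+1) (m+1), appellT m j * 2) • (x^(m-1-i) * star x^i) := by
    rw [Finset.sum_comm' (t' := Finset.range (m+1)) (s' := fun i => Finset.Ico (i+1) (m+1))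
      (fun j i => by simp only [Finset.mem_range, Finset.mem_Ico]; omega)]
    exact Finset.sum_congr rfl fun i _ => by rw [Finset.sum_smul]
  have hB : ∑ j ∈ Finset.range (m+1), ∑ i ∈ Finset.range (m-j),
      (appellT m j * 2) • (x^(m-1-i) * star x^i)
      = ∑ i ∈ Finset.range (m+1),
          (∑ j ∈ Finset.range (m-i), appellT m j * 2) • (x^(m-1-i) * star x^i) := by
    rw [Finset.sum_comm' (t' := Finset.range (m+1)) (s' := fun i => Finset.range (m-i))
      (fun j i => by simp only [Finset.mem_range]; omega)]
    exact Finset.sum_congr rfl fun i _ => by rw [Finset.sum_smul]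
  have hC : ∑ j ∈ Finset.range (m+1), (appellT m j * ((j:ℝ) * 2)) • (x^(j-1) * star x^(m-j))
      = ∑ i ∈ Finset.range (m+1),
          (appellT m (m-i) * (((m-i:ℕ):ℝ) * 2)) • (x^(m-1-i) * star x^i) := by
    rw [← Finset.sum_range_reflect]
    refine Finset.sum_congr rfl fun i hi => ?_
    rw [Finset.mem_range] at hi
    have h1 : m + 1 - 1 - i = m - i := by omega
    have h2 : m - i - 1 = m - 1 - i := by omega
    have h3 : m - (m - i) = i := by omega
    rw [h1, h2, h3]
  rw [hA, hB, hC, ← Finset.sum_sub_distrib, ← Finset.sum_add_distrib]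
  refine Finset.sum_eq_zero fun i hi => ?_
  rw [Finset.mem_range] at hi
  rw [← sub_smul, ← add_smul, coeffZero' m i hi, zero_smul]

/-- `conj Q_m` is right anti-hyperholomorphic on `ℍ`:
`∂(conj Q_m)/∂x₀ - (∂(conj Q_m)/∂x₁)e₁ - (∂(conj Q_m)/∂x₂)e₂ - (∂(conj Q_m)/∂x₃)e₃ = 0`,
the units multiplying on the right. -/
theorem conj_appellQ_right_anti_hyperholomorphic (m : ℕ) (x : ℍ[ℝ]) :
    fderiv ℝ (fun y => star (appellQ m y)) x 1
      - fderiv ℝ (fun y => star (appellQ m y)) x e1 * e1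
      - fderiv ℝ (fun y => star (appellQ m y)) x e2 * e2
      - fderiv ℝ (fun y => star (appellQ m y)) x e3 * e3 = 0 := by
  have hQ : (fun y : ℍ[ℝ] => star (appellQ m y))
      = fun y => ∑ j ∈ Finset.range (m+1), appellT m j • (y ^ j * (star y) ^ (m - j)) := by
    funext y
    simp only [appellQ, star_sum, Quaternion.star_smul, star_mul, star_pow, star_star]
  have hL : HasFDerivAt (fun y : ℍ[ℝ] => star (appellQ m y))
      (∑ j ∈ Finset.range (m+1), appellT m j •
        (∑ i ∈ Finset.range j, ins (x ^ i) (x ^ (j - 1 - i) * (star x) ^ (m-j))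
          + ∑ i ∈ Finset.range (m-j), sins (x ^ j * (star x) ^ i) ((star x) ^ (m-j-1-i)))) x := by
    rw [hQ]
    exact HasFDerivAt.fun_sum fun j _ => (hasFDerivAt_qmono j (m-j) x).const_smul (appellT m j)
  rw [hL.fderiv]
  simp only [ContinuousLinearMap.sum_apply, ContinuousLinearMap.smul_apply,
    ContinuousLinearMap.add_apply, ins_apply, sins_apply]
  rw [Finset.sum_mul, Finset.sum_mul, Finset.sum_mul,
    ← Finset.sum_sub_distrib, ← Finset.sum_sub_distrib, ← Finset.sum_sub_distrib,
    ← master m x]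
  refine Finset.sum_congr rfl fun j hj => ?_
  rw [Finset.mem_range] at hj
  simp only [smul_mul_assoc, ← smul_sub]
  simp only [add_mul, Finset.sum_mul]
  have hre : ∀ A B C D E F G H : ℍ[ℝ],
      A + B - (C + D) - (E + F) - (G + H) = (A - C - E - G) + (B - D - F - H) := by
    intros; abel
  rw [hre, ← Finset.sum_sub_distrib, ← Finset.sum_sub_distrib, ← Finset.sum_sub_distrib,
    ← Finset.sum_sub_distrib, ← Finset.sum_sub_distrib, ← Finset.sum_sub_distrib]
  rw [Finset.sum_congr rfl (fun i hi => termA m j i (Finset.mem_range.mp hi) (by omega) x)]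
  rw [Finset.sum_congr rfl (fun i hi => termB m j i (Finset.mem_range.mp hi) x)]
  rw [Finset.sum_add_distrib, Finset.sum_const, Finset.card_range,
    Finset.sum_range_reflect (fun k => (2:ℝ) • (x^(m-1-k) * star x^k)) j]
  rw [show (∑ i ∈ Finset.range (m-j), -((2:ℝ) • (x^(m-1-i) * star x^i)))
      = -(∑ i ∈ Finset.range (m-j), (2:ℝ) • (x^(m-1-i) * star x^i)) from Finset.sum_neg_distrib _]
  unfold Fj
  rw [← Nat.cast_smul_eq_nsmul ℝ j ((2:ℝ) • (x^(j-1) * star x^(m-j)))]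
  simp only [← Finset.smul_sum]
  module
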